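/- Under the abstract variational framework, let γ₁, γ₂ : X → ℝ be bounded measurable with γ₁ ≥ 0 μ-a.e., let ℓ : V → ℝ be a linear functional, and let u₁, u₂ ∈ V be weak solutions for (γ₁, ℓ) and (γ₂, ℓ) respectively. Then the energy identity holds: a(u₁ − u₂, u₁ − u₂) + ∫_X γ₁·(T(u₁ − u₂))² dμ = ℓ(u₁) − ℓ(u₂) + ∫_X (γ₁ − γ₂)·(Tu₂)² dμ. (This is the central identity in the proof of the monotonicity estimate, Lemma 4.1.) -/

import Mathlib

open MeasureTheory

/-- Energy identity from the proof of the monotonicity estimate (Lemma 4.1):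
`a(u₁−u₂,u₁−u₂) + ∫_X γ₁ (T(u₁−u₂))² dμ = ℓ(u₁) − ℓ(u₂) + ∫_X (γ₁−γ₂)(Tu₂)² dμ`. -/
theorem monotonicity_energy_identity
    {V : Type*} [AddCommGroup V] [Module ℝ V]
    {X : Type*} [MeasurableSpace X] {μ : Measure X}
    (a : V → V → ℝ)
    (ha_symm : ∀ v w, a v w = a w v)
    (ha_add : ∀ u v w, a (u + v) w = a u w + a v w)
    (ha_smul : ∀ (c : ℝ) (v w : V), a (c • v) w = c * a v w)
    (ha_nonneg : ∀ v, 0 ≤ a v v)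
    (T : V →ₗ[ℝ] (X → ℝ))
    (hT : ∀ v, MemLp (T v) 2 μ)
    (γ₁ γ₂ : X → ℝ)
    (hγ₁m : Measurable γ₁) (hγ₂m : Measurable γ₂)
    (hγ₁b : ∃ C, ∀ x, |γ₁ x| ≤ C) (hγ₂b : ∃ C, ∀ x, |γ₂ x| ≤ C)
    (hγ₁0 : ∀ᵐ x ∂μ, 0 ≤ γ₁ x)
    (ℓ : V →ₗ[ℝ] ℝ)
    (u₁ u₂ : V)
    (hu₁ : ∀ w, a u₁ w + ∫ x, γ₁ x * T u₁ x * T w x ∂μ = ℓ w)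
    (hu₂ : ∀ w, a u₂ w + ∫ x, γ₂ x * T u₂ x * T w x ∂μ = ℓ w) :
    a (u₁ - u₂) (u₁ - u₂) + ∫ x, γ₁ x * (T (u₁ - u₂) x) ^ 2 ∂μ =
      ℓ u₁ - ℓ u₂ + ∫ x, (γ₁ x - γ₂ x) * (T u₂ x) ^ 2 ∂μ := by
  -- integrability of γ ⬝ Tv ⬝ Tw
  have int : ∀ (γ : X → ℝ), Measurable γ → (∃ C, ∀ x, |γ x| ≤ C) → ∀ v w : V,
      Integrable (fun x => γ x * T v x * T w x) μ := by
    intro γ hm hb v w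
    have h1 : Integrable (fun x => T v x * T w x) μ := by
      have hvw := ((hT v).add (hT w)).integrable_sq
      have hv := (hT v).integrable_sq
      have hw := (hT w).integrable_sq
      have heq : (fun x => T v x * T w x) =
          fun x => (2⁻¹ : ℝ) * ((T v + T w) x ^ 2 - T v x ^ 2 - T w x ^ 2) := by
        funext x; simp only [Pi.add_apply]; ring
      rw [heq]
      exact ((hvw.sub hv).sub hw).const_mul _
    have h2 := h1.bdd_mul hm.aestronglyMeasurable
      (c := hb.choose) (Filter.Eventually.of_forall fun x => by simpa using hb.choose_spec x)
    simpa [mul_assoc] using h2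
  -- bilinearity in the second argument
  have ha_sub₁ : ∀ u v w : V, a (u - v) w = a u w - a v w := by
    intro u v w
    have : u - v = u + (-1 : ℝ) • v := by simp [sub_eq_add_neg]
    rw [this, ha_add, ha_smul]; ring
  have ha_sub₂ : ∀ u v w : V, a u (v - w) = a u v - a u w := by
    intro u v w
    rw [ha_symm, ha_sub₁, ha_symm v u, ha_symm w u]
  -- splitting integrals
  have split : ∀ (γ : X → ℝ) (hm : Measurable γ) (hb : ∃ C, ∀ x, |γ x| ≤ C) (v w₁ w₂ : V),
      ∫ x, γ x * T v x * (T w₁ x - T w₂ x) ∂μ =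
        (∫ x, γ x * T v x * T w₁ x ∂μ) - ∫ x, γ x * T v x * T w₂ x ∂μ := by
    intro γ hm hb v w₁ w₂
    rw [← integral_sub (int γ hm hb v w₁) (int γ hm hb v w₂)]
    congr 1; funext x; ring
  have E1 := hu₁ (u₁ - u₂)
  have E2 := hu₂ (u₁ - u₂)
  have E3 := hu₂ u₁
  have E4 := hu₁ u₂
  simp only [map_sub, Pi.sub_apply] at E1 E2 ⊢
  rw [split γ₁ hγ₁m hγ₁b u₁ u₁ u₂, ha_sub₂] at E1
  rw [split γ₂ hγ₂m hγ₂b u₂ u₁ u₂, ha_sub₂] at E2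
  -- expand the a-part of the goal
  have hAexp : a (u₁ - u₂) (u₁ - u₂) = a u₁ u₁ - a u₁ u₂ - (a u₂ u₁ - a u₂ u₂) := by
    rw [ha_sub₁, ha_sub₂, ha_sub₂]
  -- expand the left integral of the goal
  have hLint : ∫ x, γ₁ x * (T u₁ x - T u₂ x) ^ 2 ∂μ =
      (∫ x, γ₁ x * T u₁ x * T u₁ x ∂μ) + (∫ x, γ₁ x * T u₂ x * T u₂ x ∂μ)
        - 2 * ∫ x, γ₁ x * T u₁ x * T u₂ x ∂μ := by
    have hf : Integrable (fun x => γ₁ x * T u₁ x * T u₁ x + γ₁ x * T u₂ x * T u₂ x) μ :=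
      (int γ₁ hγ₁m hγ₁b u₁ u₁).add (int γ₁ hγ₁m hγ₁b u₂ u₂)
    have hg : Integrable (fun x => 2 * (γ₁ x * T u₁ x * T u₂ x)) μ :=
      (int γ₁ hγ₁m hγ₁b u₁ u₂).const_mul (2 : ℝ)
    rw [show (fun x => γ₁ x * (T u₁ x - T u₂ x) ^ 2) =
        fun x => (γ₁ x * T u₁ x * T u₁ x + γ₁ x * T u₂ x * T u₂ x)
          - 2 * (γ₁ x * T u₁ x * T u₂ x) from by funext x; ring,
      integral_sub hf hg,
      integral_add (int γ₁ hγ₁m hγ₁b u₁ u₁) (int γ₁ hγ₁m hγ₁b u₂ u₂),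
      integral_const_mul]
  -- expand the right integral of the goal
  have hRint : ∫ x, (γ₁ x - γ₂ x) * (T u₂ x) ^ 2 ∂μ =
      (∫ x, γ₁ x * T u₂ x * T u₂ x ∂μ) - ∫ x, γ₂ x * T u₂ x * T u₂ x ∂μ := by
    rw [← integral_sub (int γ₁ hγ₁m hγ₁b u₂ u₂) (int γ₂ hγ₂m hγ₂b u₂ u₂)]
    congr 1; funext x; ring
  rw [hAexp, hLint, hRint, ha_symm u₂ u₁] at *
  linarith
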